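/- Let Z be an accessible FSM with start state s, let X_1, …, X_n be pairwise disjoint thin modules of Z, let W = Z/X_1, …, X_n be the contraction with quotient map ρ, and let q be a node of Z with q ≠ s such that K_q is not contained in any X_i. Then W is accessible, ρ(q) is not the start state of W, and ρ(K_q) = K_{ρ(q)}, where K_{ρ(q)} is computed in W. -/

import Mathlib

open Classical

universe u v

variable {Q : Type u} {E : Type v}

/-- `u` is an entrance of `M`: `u ∈ M` receives an arc from outside `M`. -/
def IsEntrance (δ : Q → E → Option Q) (M : Set Q) (u : Q) : Prop :=
  u ∈ M ∧ ∃ x : E, ∃ v : Q, v ∉ M ∧ δ v x = some u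

/-- `v` is an `x`-exit of `M`. -/
def IsExit (δ : Q → E → Option Q) (M : Set Q) (x : E) (v : Q) : Prop :=
  v ∉ M ∧ ∃ u ∈ M, δ u x = some v

/-- `M` is a module of the FSM `(Q, E, δ, s)`. -/
def IsFsmModule (δ : Q → E → Option Q) (s : Q) (M : Set Q) : Prop :=
  M.Nonempty ∧
  (∀ u v : Q, IsEntrance δ M u → IsEntrance δ M v → u = v) ∧
  (s ∈ M → ∀ u : Q, IsEntrance δ M u → u = s) ∧
  ∀ x : E, (∃ v, IsExit δ M x v) →
    ((∀ v w : Q, IsExit δ M x v → IsExit δ M x w → v = w) ∧ ∀ u ∈ M, (δ u x).isSome)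

/-- `M` contains an `x`-cycle. -/
def HasXCycleIn (δ : Q → E → Option Q) (x : E) (M : Set Q) : Prop :=
  ∃ q ∈ M, Relation.TransGen (fun a b => a ∈ M ∧ δ a x = some b) q q

/-- `M` is a thin module. -/
def IsThinModule (δ : Q → E → Option Q) (s : Q) (M : Set Q) : Prop :=
  IsFsmModule δ s M ∧ ∀ x : E, (¬ ∃ v, IsExit δ M x v) ∨ ¬ HasXCycleIn δ x M

/-- One transition step of the FSM, as a digraph arc. -/
def FsmStep (δ : Q → E → Option Q) (u v : Q) : Prop := ∃ x : E, δ u x = some v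

/-- Reachability by a directed path. -/
def Reaches (δ : Q → E → Option Q) : Q → Q → Prop := Relation.ReflTransGen (FsmStep δ)

/-- Every state is reachable from the start state. -/
def Accessible (δ : Q → E → Option Q) (s : Q) : Prop := ∀ q : Q, Reaches δ s q

/-- `σ` is the start node of the module `M`. -/
def IsStartNode (δ : Q → E → Option Q) (s : Q) (M : Set Q) (σ : Q) : Prop :=
  (s ∈ M ∧ σ = s) ∨ (s ∉ M ∧ IsEntrance δ M σ)

/-- Two sets overlap. -/
def Overlap {α : Type*} (X Y : Set α) : Prop :=
  (X ∩ Y).Nonempty ∧ ¬ X ⊆ Y ∧ ¬ Y ⊆ X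

/-- A collection of sets is overlapping: across every partition into two
nonempty blocks there is an overlapping pair. -/
def OverlapColl {α : Type*} (S : Set (Set α)) : Prop :=
  ∀ T ⊆ S, T.Nonempty → (S \ T).Nonempty → ∃ a ∈ T, ∃ b ∈ S \ T, Overlap a b

/-- `M` is decomposable with respect to the family `F`. -/
def Decomposable {α : Type*} (F : Set (Set α)) (M : Set α) : Prop :=
  ∃ S : Set (Set α), S ⊆ F ∧ OverlapColl S ∧ ⋃₀ S = M ∧ ∃ a ∈ S, ∃ b ∈ S, a ≠ b

/-- `M` is an indecomposable member of the family `F`. -/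
def Indecomposable {α : Type*} (F : Set (Set α)) (M : Set α) : Prop :=
  M ∈ F ∧ ¬ Decomposable F M

/-- `M` is an indecomposable thin module of the FSM. -/
def IndecompThin (δ : Q → E → Option Q) (s : Q) (M : Set Q) : Prop :=
  Indecomposable {N : Set Q | IsThinModule δ s N} M

/-- `K_q`: the intersection of all thin modules containing `q` of which `q` is not
the start node. -/
def Kset (δ : Q → E → Option Q) (s : Q) (q : Q) : Set Q :=
  ⋂₀ {M : Set Q | IsThinModule δ s M ∧ q ∈ M ∧ ¬ IsStartNode δ s M q}

/-- The quotient map `ρ` of the contraction `Z/X₁,…,Xₙ`: it sends each state to its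
class, namely `X i` if `q ∈ X i`, and the singleton `{q}` otherwise. -/
noncomputable def rho {n : ℕ} (X : Fin n → Set Q) (q : Q) : Set Q :=
  if h : ∃ i, q ∈ X i then X (Classical.choose h) else {q}

/-- The states of the contraction `Z/X₁,…,Xₙ`: the classes of the quotient map. -/
def CState {Q : Type u} {n : ℕ} (X : Fin n → Set Q) : Type u :=
  {A : Set Q // ∃ q : Q, rho X q = A}

/-- The transition relation of the contraction `Z/X₁,…,Xₙ`:
`δ'(ρ(u), x) = ρ(v)` iff `δ(u', x) = v'` for some `u'`, `v'` in the classes of `u`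
and `v`, where the two classes are distinct or the class is a singleton `{u}` (not
a collapsed module) with a self-loop `δ(u, x) = u`. -/
def CRel {n : ℕ} (δ : Q → E → Option Q) (X : Fin n → Set Q)
    (A : Set Q) (x : E) (B : Set Q) : Prop :=
  (∃ u v : Q, rho X u = A ∧ rho X v = B ∧ δ u x = some v) ∧
  (A ≠ B ∨ ∃ u : Q, A = {u} ∧ (∀ i, u ∉ X i) ∧ δ u x = some u)

/-- The transition function of the contraction `Z/X₁,…,Xₙ`, realising the relation
`CRel` (which is single-valued since the `Xᵢ` are modules). -/
noncomputable def Cδ {n : ℕ} (δ : Q → E → Option Q) (X : Fin n → Set Q) :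
    CState X → E → Option (CState X) :=
  fun A x =>
    if h : ∃ B : CState X, CRel δ X A.1 x B.1 then some (Classical.choose h)
    else none

/-! ### Auxiliary lemmas -/

section Aux

variable {Q : Type u} {E : Type v}

/-! ### Generic relation boundary lemmas -/

lemma exists_boundary_out {r : Q → Q → Prop} {S : Set Q} {a b : Q}
    (h : Relation.ReflTransGen r a b) (ha : a ∈ S) :
    b ∉ S → ∃ u v, r u v ∧ u ∈ S ∧ v ∉ S := by
  induction h with
  | refl => exact fun hb => (hb ha).elim
  | @tail c d hac hcd ih =>
      intro hd
      by_cases hc : c ∈ S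
      · exact ⟨c, d, hcd, hc, hd⟩
      · exact ih hc

lemma exists_boundary_in {r : Q → Q → Prop} {S : Set Q} {a b : Q}
    (h : Relation.ReflTransGen r a b) (ha : a ∉ S) :
    b ∈ S → ∃ u v, r u v ∧ u ∉ S ∧ v ∈ S := by
  induction h with
  | refl => exact fun hb => (ha hb).elim
  | @tail c d hac hcd ih =>
      intro hd
      by_cases hc : c ∈ S
      · exact ih hc
      · exact ⟨c, d, hcd, hc, hd⟩

lemma transGen_last {r : Q → Q → Prop} {p : Q → Prop}
    (hr : ∀ a b, r a b → p b) {a b : Q} (h : Relation.TransGen r a b) : p b := by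
  induction h with
  | single h => exact hr _ _ h
  | tail _ h _ => exact hr _ _ h

/-! ### Class (quotient) lemmas -/

variable {n : ℕ} {X : Fin n → Set Q}

lemma mem_rho_self (u : Q) : u ∈ rho X u := by
  unfold rho
  split
  · exact Classical.choose_spec ‹∃ i, u ∈ X i›
  · exact rfl

lemma rho_eq_X (hdisj : ∀ i j, i ≠ j → Disjoint (X i) (X j)) {u : Q} {i : Fin n}
    (hu : u ∈ X i) : rho X u = X i := by
  unfold rho
  rw [dif_pos ⟨i, hu⟩]
  have hj := Classical.choose_spec (⟨i, hu⟩ : ∃ j, u ∈ X j)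
  by_cases h : Classical.choose (⟨i, hu⟩ : ∃ j, u ∈ X j) = i
  · rw [h]
  · exact absurd hu (Set.disjoint_left.mp (hdisj _ i h) hj)

lemma rho_singleton {u : Q} (h : ∀ i, u ∉ X i) : rho X u = {u} :=
  dif_neg (by rintro ⟨i, hi⟩; exact h i hi)

lemma rho_cases (hdisj : ∀ i j, i ≠ j → Disjoint (X i) (X j)) (u : Q) :
    (∃ i, u ∈ X i ∧ rho X u = X i) ∨ ((∀ i, u ∉ X i) ∧ rho X u = {u}) := by
  by_cases h : ∃ i, u ∈ X i
  · obtain ⟨i, hi⟩ := h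
    exact Or.inl ⟨i, hi, rho_eq_X hdisj hi⟩
  · push_neg at h
    exact Or.inr ⟨h, rho_singleton h⟩

lemma rho_eq_of_mem (hdisj : ∀ i j, i ≠ j → Disjoint (X i) (X j)) {u w : Q}
    (hw : w ∈ rho X u) : rho X w = rho X u := by
  rcases rho_cases hdisj u with ⟨i, hi, hrho⟩ | ⟨hno, hrho⟩
  · rw [hrho] at hw ⊢
    exact rho_eq_X hdisj hw
  · rw [hrho] at hw ⊢
    cases hw
    exact hrho

end Aux
section ModuleAux

variable {Q : Type u} {E : Type v} {δ : Q → E → Option Q} {s : Q}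

lemma thin_exit_total {M : Set Q} (hM : IsThinModule δ s M) {x : E} {v : Q}
    (hex : IsExit δ M x v) : ∀ u ∈ M, (δ u x).isSome :=
  (hM.1.2.2.2 x ⟨v, hex⟩).2

lemma thin_exit_unique {M : Set Q} (hM : IsThinModule δ s M) {x : E} {v w : Q}
    (hv : IsExit δ M x v) (hw : IsExit δ M x w) : v = w :=
  (hM.1.2.2.2 x ⟨v, hv⟩).1 v w hv hw

lemma thin_exit_nocycle {M : Set Q} (hM : IsThinModule δ s M) {x : E} {v : Q}
    (hv : IsExit δ M x v) : ¬ HasXCycleIn δ x M :=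
  (hM.2 x).resolve_left (fun h => h ⟨v, hv⟩)

lemma startnode_mem {M : Set Q} {σ : Q} (h : IsStartNode δ s M σ) : σ ∈ M := by
  rcases h with ⟨hs, rfl⟩ | ⟨_, hent⟩
  · exact hs
  · exact hent.1

lemma entrance_eq_start {M : Set Q} (hM : IsFsmModule δ s M) {σ v : Q}
    (hσ : IsStartNode δ s M σ) (hv : IsEntrance δ M v) : v = σ := by
  rcases hσ with ⟨hs, rfl⟩ | ⟨hs, hσent⟩
  · exact hM.2.2.1 hs v hv
  · exact hM.2.1 v σ hv hσent

lemma start_eq_self {M : Set Q} {σ : Q} (hσ : IsStartNode δ s M σ) (hs : s ∈ M) :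
    σ = s := by
  rcases hσ with ⟨_, rfl⟩ | ⟨hns, _⟩
  · rfl
  · exact absurd hs hns

lemma startnode_exists (hacc : Accessible δ s) {M : Set Q} (hne : M.Nonempty) :
    ∃ σ, IsStartNode δ s M σ := by
  by_cases hs : s ∈ M
  · exact ⟨s, Or.inl ⟨hs, rfl⟩⟩
  · obtain ⟨m, hm⟩ := hne
    obtain ⟨u, v, ⟨x, harc⟩, hu, hv⟩ := exists_boundary_in (hacc m) hs hm
    exact ⟨v, Or.inr ⟨hs, hv, x, u, hu, harc⟩⟩

/-! ### Rank -/

/-- there is a walk of length `n` from `a` to `b`. -/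
def RchN (δ : Q → E → Option Q) (n : ℕ) (a b : Q) : Prop :=
  ∃ g : ℕ → Q, g 0 = a ∧ g n = b ∧ ∀ i < n, FsmStep δ (g i) (g (i + 1))

lemma rchN_of_reaches {a b : Q} (h : Reaches δ a b) : ∃ n, RchN δ n a b := by
  induction h with
  | refl => exact ⟨0, fun _ => a, rfl, rfl, fun i hi => absurd hi (Nat.not_lt_zero i)⟩
  | @tail c d hac hcd ih =>
      obtain ⟨m, g, hg0, hgm, hsteps⟩ := ih
      refine ⟨m + 1, fun k => if k = m + 1 then d else g k, ?_, by simp, ?_⟩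
      · simp [hg0]
      · intro i hi
        rcases Nat.lt_succ_iff_lt_or_eq.mp hi with hlt | rfl
        · have h1 : i ≠ m + 1 := by omega
          have h2 : i + 1 ≠ m + 1 := by omega
          simpa [h1, h2, show i ≠ m by omega] using hsteps i hlt
        · have h1 : i ≠ i + 1 := by omega
          simpa [h1, hgm] using hcd

/-- rank: length of a shortest walk from `s`. -/
noncomputable def rnk (δ : Q → E → Option Q) (s : Q) (v : Q) : ℕ :=
  sInf {m | RchN δ m s v}

lemma rank_lt (hacc : Accessible δ s) {M : Set Q} (hM : IsFsmModule δ s M) {σ : Q}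
    (hσ : IsStartNode δ s M σ) {v : Q} (hv : v ∈ M) (hne : v ≠ σ) :
    rnk δ s σ < rnk δ s v := by
  have key : ∀ m : ℕ, ∀ w : Q, RchN δ m s w → w ∈ M → w ≠ σ → ∃ k < m, RchN δ k s σ := by
    intro m
    induction m using Nat.strong_induction_on with
    | _ m ih =>
        intro w hw hwM hwne
        obtain ⟨g, hg0, hgm, hsteps⟩ := hw
        match m with
        | 0 =>
            exfalso
            have hws : w = s := by rw [← hgm, hg0]
            have hsM : s ∈ M := hws ▸ hwM
            have hσs : σ = s := start_eq_self hσ hsM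
            exact hwne (by rw [hws, hσs])
        | Nat.succ m' =>
            have hstep : FsmStep δ (g m') w := hgm ▸ hsteps m' (Nat.lt_succ_self m')
            by_cases huM : g m' ∈ M
            · by_cases huσ : g m' = σ
              · exact ⟨m', Nat.lt_succ_self m', g, hg0, huσ, fun i hi => hsteps i (by omega)⟩
              · obtain ⟨k, hk, hrch⟩ :=
                  ih m' (Nat.lt_succ_self m') (g m') ⟨g, hg0, rfl, fun i hi => hsteps i (by omega)⟩ huM huσ
                exact ⟨k, by omega, hrch⟩
            · obtain ⟨x, harc⟩ := hstep
              have hent : IsEntrance δ M w := ⟨hwM, x, g m', huM, harc⟩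
              exact absurd (entrance_eq_start hM hσ hent) hwne
  have hvex : ∃ m, RchN δ m s v := rchN_of_reaches (hacc v)
  have hmem : RchN δ (rnk δ s v) s v := Nat.sInf_mem hvex
  obtain ⟨k, hk, hrch⟩ := key _ v hmem hv hne
  exact lt_of_le_of_lt (Nat.sInf_le hrch) hk

/-! ### Within-module reachability -/

lemma within_reach {M : Set Q} (hM : IsFsmModule δ s M) {σ : Q}
    (hσ : IsStartNode δ s M σ) {w : Q} (h : Reaches δ s w) (hw : w ∈ M) :
    Relation.ReflTransGen (fun a b => a ∈ M ∧ b ∈ M ∧ FsmStep δ a b) σ w := by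
  set rM := fun a b => a ∈ M ∧ b ∈ M ∧ FsmStep δ a b with hrM
  have main : ∀ a, Relation.ReflTransGen (FsmStep δ) a w →
      (a ∈ M → (Relation.ReflTransGen rM a w ∨ Relation.ReflTransGen rM σ w)) ∧
      (a ∉ M → Relation.ReflTransGen rM σ w) := by
    intro a h
    induction h using Relation.ReflTransGen.head_induction_on with
    | refl =>
        exact ⟨fun _ => Or.inl Relation.ReflTransGen.refl, fun ha => absurd hw ha⟩
    | @head a b hab hbw ih =>
        constructor
        · intro haM
          by_cases hbM : b ∈ M
          · rcases ih.1 hbM with h1 | h1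
            · exact Or.inl (Relation.ReflTransGen.head ⟨haM, hbM, hab⟩ h1)
            · exact Or.inr h1
          · exact Or.inr (ih.2 hbM)
        · intro haM
          by_cases hbM : b ∈ M
          · obtain ⟨x, harc⟩ := hab
            have hent : IsEntrance δ M b := ⟨hbM, x, a, haM, harc⟩
            have hbσ : b = σ := entrance_eq_start hM hσ hent
            rcases ih.1 hbM with h1 | h1
            · exact hbσ ▸ h1
            · exact h1
          · exact ih.2 hbM
  by_cases hs' : s ∈ M
  · have hσs : σ = s := start_eq_self hσ hs'
    rcases (main s h).1 hs' with h1 | h1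
    · exact hσs ▸ h1
    · exact h1
  · exact (main s h).2 hs'

/-- the start node of `N'` lies in `N`, provided `q ∈ N ∩ N'` and `σ_N ∉ N'`. -/
lemma start_mem_other {N N' : Set Q} (hN : IsFsmModule δ s N) (hN' : IsFsmModule δ s N')
    {σ σ' : Q} (hσ : IsStartNode δ s N σ) (hσ' : IsStartNode δ s N' σ')
    {q : Q} (hqN : q ∈ N) (hqN' : q ∈ N') (hσnot : σ ∉ N')
    (hreach : Reaches δ s q) : σ' ∈ N := by
  have hwr := within_reach hN hσ hreach hqN
  obtain ⟨u, v, hr, hu, hv⟩ := exists_boundary_in hwr hσnot hqN'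
  obtain ⟨x, harc⟩ := hr.2.2
  have hent : IsEntrance δ N' v := ⟨hv, x, u, hu, harc⟩
  have := entrance_eq_start hN' hσ' hent
  exact this ▸ hr.2.1

/-- dichotomy for an overlapping pair. -/
lemma dich {A M : Set Q} (hA : IsFsmModule δ s A) (hM : IsFsmModule δ s M)
    {σA σM : Q} (hσA : IsStartNode δ s A σA) (hσM : IsStartNode δ s M σM)
    {z : Q} (hz : z ∈ A ∩ M) (hacc : Accessible δ s) : σA ∈ M ∨ σM ∈ A ∩ M := by
  by_cases hs' : s ∈ A ∩ M
  · right
    have : σM = s := start_eq_self hσM hs'.2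
    exact this ▸ hs'
  · obtain ⟨u, v, ⟨x, harc⟩, hu, hv⟩ := exists_boundary_in (hacc z) hs' hz
    by_cases huA : u ∈ A
    · have huM : u ∉ M := fun h => hu ⟨huA, h⟩
      have hent : IsEntrance δ M v := ⟨hv.2, x, u, huM, harc⟩
      right
      exact (entrance_eq_start hM hσM hent) ▸ hv
    · have hent : IsEntrance δ A v := ⟨hv.1, x, u, huA, harc⟩
      left
      exact (entrance_eq_start hA hσA hent) ▸ hv.2

end ModuleAux
section WalkAux

variable {Q : Type u} {E : Type v} {δ : Q → E → Option Q} {s : Q}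

lemma iterate_cycle {r : Q → Q → Prop} {g : Q → Q} {w : Q}
    (hstep : ∀ k : ℕ, r (g^[k] w) (g^[k + 1] w)) :
    ∀ i d : ℕ, Relation.TransGen r (g^[i] w) (g^[i + d + 1] w) := by
  intro i d
  induction d with
  | zero => exact Relation.TransGen.single (hstep i)
  | succ d ih => exact Relation.TransGen.tail ih (hstep (i + d + 1))

lemma exists_exit_walk [Finite Q] {x : E} {M : Set Q}
    (htot : ∀ u ∈ M, (δ u x).isSome) (hnc : ¬ HasXCycleIn δ x M) {w : Q} (hw : w ∈ M) :
    ∃ t v, Relation.ReflTransGen (fun a b => a ∈ M ∧ b ∈ M ∧ δ a x = some b) w t ∧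
      t ∈ M ∧ δ t x = some v ∧ v ∉ M := by
  by_contra hno
  push_neg at hno
  set rr := fun a b => a ∈ M ∧ b ∈ M ∧ δ a x = some b with hrr
  set g : Q → Q := fun u => (δ u x).getD u with hg
  have key : ∀ k : ℕ, g^[k] w ∈ M ∧ Relation.ReflTransGen rr w (g^[k] w) := by
    intro k
    induction k with
    | zero => exact ⟨hw, Relation.ReflTransGen.refl⟩
    | succ k ih =>
        obtain ⟨hmem, hrtg⟩ := ih
        obtain ⟨v, hv⟩ := Option.isSome_iff_exists.mp (htot _ hmem)
        have hgv : g^[k + 1] w = v := by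
          rw [Function.iterate_succ_apply', hg]
          show (δ (g^[k] w) x).getD (g^[k] w) = v; rw [hv]; rfl
        have hvM : v ∈ M := hno _ v hrtg hmem hv
        refine ⟨hgv ▸ hvM, Relation.ReflTransGen.tail hrtg ?_⟩
        rw [hgv]
        exact ⟨hmem, hvM, hv⟩
  have hstep : ∀ k : ℕ, rr (g^[k] w) (g^[k + 1] w) := by
    intro k
    obtain ⟨hmem, _⟩ := key k
    obtain ⟨v, hv⟩ := Option.isSome_iff_exists.mp (htot _ hmem)
    have hgv : g^[k + 1] w = v := by
      rw [Function.iterate_succ_apply', hg]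
      show (δ (g^[k] w) x).getD (g^[k] w) = v; rw [hv]; rfl
    have hvM : v ∈ M := hno _ v (key k).2 hmem hv
    rw [hgv]
    exact ⟨hmem, hvM, hv⟩
  obtain ⟨i, j, hne, heq⟩ := Finite.exists_ne_map_eq_of_infinite (fun k : ℕ => g^[k] w)
  rcases Nat.lt_or_ge i j with hij | hij
  · have hcyc := iterate_cycle hstep i (j - i - 1)
    have : i + (j - i - 1) + 1 = j := by omega
    rw [this, ← heq] at hcyc
    exact hnc ⟨g^[i] w, (key i).1, Relation.TransGen.mono (fun a b hab => ⟨hab.1, hab.2.2⟩) _ _ hcyc⟩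
  · have hji : j < i := by omega
    have hcyc := iterate_cycle hstep j (i - j - 1)
    have : j + (i - j - 1) + 1 = i := by omega
    rw [this, heq] at hcyc
    exact hnc ⟨g^[j] w, (key j).1, Relation.TransGen.mono (fun a b hab => ⟨hab.1, hab.2.2⟩) _ _ hcyc⟩

end WalkAux
section LemmaE

variable {Q : Type u} {E : Type v}

lemma lemmaE [Finite Q] {δ : Q → E → Option Q} {s q : Q} (hacc : Accessible δ s)
    {A : Set Q} (hA : IsThinModule δ s A)
    (hH : ∀ M, (IsThinModule δ s M ∧ q ∈ M ∧ ¬ IsStartNode δ s M q) → (A ∩ M).Nonempty) :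
    (A ∩ Kset δ s q).Nonempty := by
  classical
  by_contra hempty
  have hAK : ∀ a ∈ A, ∃ M, (IsThinModule δ s M ∧ q ∈ M ∧ ¬ IsStartNode δ s M q) ∧ a ∉ M := by
    intro a ha
    have h1 : a ∉ Kset δ s q := fun hk => hempty ⟨a, ha, hk⟩
    rw [Kset, Set.mem_sInter] at h1
    push_neg at h1
    obtain ⟨M, hM, haM⟩ := h1
    exact ⟨M, hM, haM⟩
  obtain ⟨σA, hσA⟩ := startnode_exists hacc hA.1.1
  have hσAA : σA ∈ A := startnode_mem hσA
  set J : Set Q := {σ | σ ∈ A ∧ ∃ N, (IsThinModule δ s N ∧ q ∈ N ∧ ¬ IsStartNode δ s N q) ∧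
    IsStartNode δ s N σ} with hJ
  obtain ⟨M₀, hM₀, hσAnot⟩ := hAK σA hσAA
  obtain ⟨σ₀, hσ₀⟩ := startnode_exists hacc hM₀.1.1.1
  have hσ₀J : σ₀ ∈ J := by
    rcases dich hA.1 hM₀.1.1 hσA hσ₀ (hH M₀ hM₀).some_mem hacc with h | h
    · exact absurd h hσAnot
    · exact ⟨h.1, M₀, hM₀, hσ₀⟩
  obtain ⟨σ, hσJ, hmax⟩ := Set.exists_max_image J (rnk δ s) (Set.toFinite J) ⟨σ₀, hσ₀J⟩
  obtain ⟨hσA', N, hN, hσstart⟩ := hσJ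
  obtain ⟨N', hN', hσnotN'⟩ := hAK σ hσA'
  obtain ⟨σ', hσ'⟩ := startnode_exists hacc hN'.1.1.1
  have hσ'inN : σ' ∈ N :=
    start_mem_other hN.1.1 hN'.1.1 hσstart hσ' hN.2.1 hN'.2.1 hσnotN' (hacc q)
  have hσ'ne : σ' ≠ σ := fun h => hσnotN' (h ▸ startnode_mem hσ')
  have h2 : rnk δ s σ < rnk δ s σ' := rank_lt hacc hN.1.1 hσstart hσ'inN hσ'ne
  have contraA : σ' ∉ A := by
    intro hσ'A
    have hmem : σ' ∈ J := ⟨hσ'A, N', hN', hσ'⟩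
    have := hmax σ' hmem
    omega
  rcases dich hA.1 hN'.1.1 hσA hσ' (hH N' hN').some_mem hacc with h | h
  · -- σA ∈ N'
    by_cases hcase : σ' = σA
    · exact contraA (hcase ▸ hσAA)
    · have h1 : rnk δ s σ' < rnk δ s σA :=
        rank_lt hacc hN'.1.1 hσ' h (fun hh => hcase hh.symm)
      have h3 : rnk δ s σA < rnk δ s σ :=
        rank_lt hacc hA.1 hσA hσA' (fun hh => hσnotN' (hh ▸ h))
      omega
  · exact contraA h.1

end LemmaE
section UnionLemma

variable {Q : Type u} {E : Type v} {δ : Q → E → Option Q} {s : Q} {M N : Set Q}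

lemma transGen_both {r : Q → Q → Prop} {S : Set Q} {a b : Q}
    (h : Relation.TransGen (fun u v => u ∈ S ∧ r u v) a b) (hb : b ∈ S) :
    Relation.TransGen (fun u v => u ∈ S ∧ v ∈ S ∧ r u v) a b := by
  induction h with
  | single h => exact Relation.TransGen.single ⟨h.1, hb, h.2⟩
  | @tail c d hac hcd ih => exact Relation.TransGen.tail (ih hcd.1) ⟨hcd.1, hb, hcd.2⟩

lemma transGen_invar {r : Q → Q → Prop} {p : Q → Prop} {a b : Q}
    (h : Relation.TransGen r a b) (ha : p a) (hstep : ∀ u v, r u v → p u → p v) :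
    p b ∧ Relation.TransGen (fun u v => r u v ∧ p u ∧ p v) a b := by
  induction h with
  | single h =>
      exact ⟨hstep _ _ h ha, Relation.TransGen.single ⟨h, ha, hstep _ _ h ha⟩⟩
  | @tail c d hac hcd ih =>
      exact ⟨hstep _ _ hcd ih.1, Relation.TransGen.tail ih.2 ⟨hcd, ih.1, hstep _ _ hcd ih.1⟩⟩

lemma entrance_union_left {u : Q} (hu : IsEntrance δ (M ∪ N) u) (huM : u ∈ M) :
    IsEntrance δ M u := by
  obtain ⟨_, x, w, hwP, arc⟩ := hu
  exact ⟨huM, x, w, fun hh => hwP (Or.inl hh), arc⟩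

lemma entrance_union_right {u : Q} (hu : IsEntrance δ (M ∪ N) u) (huN : u ∈ N) :
    IsEntrance δ N u := by
  obtain ⟨_, x, w, hwP, arc⟩ := hu
  exact ⟨huN, x, w, fun hh => hwP (Or.inr hh), arc⟩

lemma union_entrance_aux (hM : IsThinModule δ s M) (hN : IsThinModule δ s N)
    (hw : (M ∩ N).Nonempty) (hacc : Accessible δ s)
    {u₁ : Q} (h₁ : IsEntrance δ (M ∪ N) u₁) (hu₁M : u₁ ∈ M) (hu₁N : u₁ ∉ N)
    {u₂ : Q} (h₂ : IsEntrance δ (M ∪ N) u₂) (hu₂N : u₂ ∈ N) (hu₂M : u₂ ∉ M) : False := by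
  have hent₁ : IsEntrance δ M u₁ := entrance_union_left h₁ hu₁M
  have hent₂ : IsEntrance δ N u₂ := entrance_union_right h₂ hu₂N
  obtain ⟨w, hwMN⟩ := hw
  by_cases hs' : s ∈ M ∩ N
  · exact hu₁N ((hM.1.2.2.1 hs'.1 u₁ hent₁) ▸ hs'.2)
  · obtain ⟨p, c, ⟨x, arc⟩, hp, hc⟩ := exists_boundary_in (hacc w) hs' hwMN
    by_cases hpM : p ∈ M
    · have hpN : p ∉ N := fun h => hp ⟨hpM, h⟩
      have hentc : IsEntrance δ N c := ⟨hc.2, x, p, hpN, arc⟩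
      by_cases hsN : s ∈ N
      · exact hs' ((hN.1.2.2.1 hsN c hentc) ▸ hc)
      · have : c = u₂ := hN.1.2.1 c u₂ hentc hent₂
        exact hu₂M (this ▸ hc.1)
    · have hentc : IsEntrance δ M c := ⟨hc.1, x, p, hpM, arc⟩
      by_cases hsM : s ∈ M
      · exact hs' ((hM.1.2.2.1 hsM c hentc) ▸ hc)
      · have : c = u₁ := hM.1.2.1 c u₁ hentc hent₁
        exact hu₁N (this ▸ hc.2)

lemma union_M2 (hM : IsThinModule δ s M) (hN : IsThinModule δ s N)
    (hw : (M ∩ N).Nonempty) (hacc : Accessible δ s) :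
    ∀ u v : Q, IsEntrance δ (M ∪ N) u → IsEntrance δ (M ∪ N) v → u = v := by
  intro u v hu hv
  by_cases huM : u ∈ M <;> by_cases hvM : v ∈ M
  · exact hM.1.2.1 u v (entrance_union_left hu huM) (entrance_union_left hv hvM)
  · have hvN : v ∈ N := hv.1.resolve_left hvM
    by_cases huN : u ∈ N
    · exact hN.1.2.1 u v (entrance_union_right hu huN) (entrance_union_right hv hvN)
    · exact (union_entrance_aux hM hN hw hacc hu huM huN hv hvN hvM).elim
  · have huN : u ∈ N := hu.1.resolve_left huM
    by_cases hvN : v ∈ N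
    · exact hN.1.2.1 u v (entrance_union_right hu huN) (entrance_union_right hv hvN)
    · exact (union_entrance_aux hM hN hw hacc hv hvM hvN hu huN huM).elim
  · have huN : u ∈ N := hu.1.resolve_left huM
    have hvN : v ∈ N := hv.1.resolve_left hvM
    exact hN.1.2.1 u v (entrance_union_right hu huN) (entrance_union_right hv hvN)

lemma union_M3_aux (hM : IsThinModule δ s M) (hN : IsThinModule δ s N)
    (hw : (M ∩ N).Nonempty) (hacc : Accessible δ s) (hsP : s ∈ M ∪ N)
    {u : Q} (hu : IsEntrance δ (M ∪ N) u) (huM : u ∈ M) : u = s := by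
  have hentM : IsEntrance δ M u := entrance_union_left hu huM
  by_cases hsM : s ∈ M
  · exact hM.1.2.2.1 hsM u hentM
  · have hsN : s ∈ N := hsP.resolve_left hsM
    obtain ⟨w, hwMN⟩ := hw
    have hs' : s ∉ M ∩ N := fun h => hsM h.1
    obtain ⟨p, c, ⟨x, arc⟩, hp, hc⟩ := exists_boundary_in (hacc w) hs' hwMN
    by_cases hpM : p ∈ M
    · have hpN : p ∉ N := fun h => hp ⟨hpM, h⟩
      have hentc : IsEntrance δ N c := ⟨hc.2, x, p, hpN, arc⟩
      have : c = s := hN.1.2.2.1 hsN c hentc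
      exact absurd (this ▸ hc.1) hsM
    · have hentc : IsEntrance δ M c := ⟨hc.1, x, p, hpM, arc⟩
      have hcu : c = u := hM.1.2.1 c u hentc hentM
      have huN : u ∈ N := hcu ▸ hc.2
      exact hN.1.2.2.1 hsN u (entrance_union_right hu huN)

lemma union_M4_aux [Finite Q] (hM : IsThinModule δ s M) (hN : IsThinModule δ s N)
    (hw : (M ∩ N).Nonempty) {x : E} {v₀ u₀ : Q}
    (hv₀ : v₀ ∉ M ∪ N) (hu₀ : u₀ ∈ M) (harc₀ : δ u₀ x = some v₀) :
    (∀ v, IsExit δ (M ∪ N) x v → v = v₀) ∧ (∀ u ∈ M ∪ N, (δ u x).isSome) ∧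
      ¬ HasXCycleIn δ x (M ∪ N) := by
  have hexM : IsExit δ M x v₀ := ⟨fun h => hv₀ (Or.inl h), u₀, hu₀, harc₀⟩
  have totM := thin_exit_total hM hexM
  have nocycM := thin_exit_nocycle hM hexM
  obtain ⟨w, hwM, hwN⟩ := hw
  obtain ⟨t, v, hwalk, htM, harct, hvnotM⟩ := exists_exit_walk totM nocycM hwM
  have hvv₀ : v = v₀ := thin_exit_unique hM ⟨hvnotM, t, htM, harct⟩ hexM
  have hrtg : Relation.ReflTransGen (fun a b => a ∈ M ∧ δ a x = some b) w v₀ := by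
    refine Relation.ReflTransGen.tail
      (Relation.ReflTransGen.mono (fun a b hab => ⟨hab.1, hab.2.2⟩) _ _ hwalk) ?_
    exact ⟨htM, hvv₀ ▸ harct⟩
  obtain ⟨a, b, ⟨haM, harcb⟩, haN, hbN⟩ :=
    exists_boundary_out hrtg hwN (fun h => hv₀ (Or.inr h))
  have hexN : IsExit δ N x b := ⟨hbN, a, haN, harcb⟩
  have totN := thin_exit_total hN hexN
  have nocycN := thin_exit_nocycle hN hexN
  refine ⟨?_, ?_, ?_⟩
  · rintro v' ⟨hv'P, u, huP, harc⟩
    rcases huP with huM | huN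
    · exact thin_exit_unique hM ⟨fun h => hv'P (Or.inl h), u, huM, harc⟩ hexM
    · have hv'b : v' = b :=
        thin_exit_unique hN ⟨fun h => hv'P (Or.inr h), u, huN, harc⟩ hexN
      by_cases hbM : b ∈ M
      · exact absurd (Or.inl (hv'b ▸ hbM)) hv'P
      · exact hv'b.trans (thin_exit_unique hM ⟨hbM, a, haM, harcb⟩ hexM)
  · rintro u (huM | huN)
    · exact totM u huM
    · exact totN u huN
  · rintro ⟨z, hzP, hcyc⟩
    have hcyc' := transGen_both hcyc hzP
    have hstepM : ∀ c d : Q, (c ∈ M ∪ N ∧ d ∈ M ∪ N ∧ δ c x = some d) → c ∈ M → d ∈ M := by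
      intro c d hcd hcM
      by_contra hdM
      have : d = v₀ := thin_exit_unique hM ⟨hdM, c, hcM, hcd.2.2⟩ hexM
      exact hv₀ (this ▸ hcd.2.1)
    by_cases hzM : z ∈ M
    · obtain ⟨-, hTG⟩ := transGen_invar hcyc' hzM hstepM
      exact nocycM ⟨z, hzM,
        Relation.TransGen.mono (fun u v huv => ⟨huv.2.1, huv.1.2.2⟩) _ _ hTG⟩
    · have key : ∀ a c : Q,
          Relation.TransGen (fun u v => u ∈ M ∪ N ∧ v ∈ M ∪ N ∧ δ u x = some v) a c →
          a ∉ M → (c ∈ M ∨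
            Relation.TransGen (fun u v => u ∈ N ∧ v ∈ N ∧ δ u x = some v) a c) := by
        intro a c h
        induction h with
        | @single d hd =>
            intro haM
            by_cases hdM : d ∈ M
            · exact Or.inl hdM
            · exact Or.inr (Relation.TransGen.single
                ⟨hd.1.resolve_left haM, hd.2.1.resolve_left hdM, hd.2.2⟩)
        | @tail c' d hac' hc'd ih =>
            intro haM
            rcases ih haM with hc'M | hTG
            · exact Or.inl (hstepM c' d hc'd hc'M)
            · by_cases hdM : d ∈ M
              · exact Or.inl hdM
              · have hc'N : c' ∈ N := transGen_last (fun u v huv => huv.2.1) hTG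
                exact Or.inr (Relation.TransGen.tail hTG
                  ⟨hc'N, hc'd.2.1.resolve_left hdM, hc'd.2.2⟩)
      rcases key z z hcyc' hzM with h | hTG
      · exact hzM h
      · exact thin_exit_nocycle hN hexN ⟨z, hzP.resolve_left hzM,
          Relation.TransGen.mono (fun u v huv => ⟨huv.1, huv.2.2⟩) _ _ hTG⟩

lemma union_thin [Finite Q] (hacc : Accessible δ s)
    (hM : IsThinModule δ s M) (hN : IsThinModule δ s N) (hw : (M ∩ N).Nonempty) :
    IsThinModule δ s (M ∪ N) := by
  have hM4 : ∀ x : E, (∃ v, IsExit δ (M ∪ N) x v) →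
      ((∀ v w : Q, IsExit δ (M ∪ N) x v → IsExit δ (M ∪ N) x w → v = w) ∧
        ∀ u ∈ M ∪ N, (δ u x).isSome) ∧ ¬ HasXCycleIn δ x (M ∪ N) := by
    rintro x ⟨v₀, hv₀, u₀, hu₀, harc₀⟩
    rcases hu₀ with hu₀M | hu₀N
    · obtain ⟨huniq, htotal, hnc⟩ := union_M4_aux hM hN hw hv₀ hu₀M harc₀
      exact ⟨⟨fun v w hv hw' => (huniq v hv).trans (huniq w hw').symm, htotal⟩, hnc⟩
    · have hcomm : N ∪ M = M ∪ N := Set.union_comm N M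
      have hw' : (N ∩ M).Nonempty := Set.inter_comm M N ▸ hw
      obtain ⟨huniq, htotal, hnc⟩ :=
        union_M4_aux hN hM hw' (hcomm ▸ hv₀ : v₀ ∉ N ∪ M) hu₀N harc₀
      rw [hcomm] at huniq htotal hnc
      exact ⟨⟨fun v w hv hw' => (huniq v hv).trans (huniq w hw').symm, htotal⟩, hnc⟩
  refine ⟨⟨?_, union_M2 hM hN hw hacc, ?_, fun x hex => (hM4 x hex).1⟩, ?_⟩
  · obtain ⟨m, hm⟩ := hM.1.1
    exact ⟨m, Or.inl hm⟩
  · intro hsP u hu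
    by_cases huM : u ∈ M
    · exact union_M3_aux hM hN hw hacc hsP hu huM
    · have huN : u ∈ N := hu.1.resolve_left huM
      have hcomm : N ∪ M = M ∪ N := Set.union_comm N M
      have hw' : (N ∩ M).Nonempty := Set.inter_comm M N ▸ hw
      exact union_M3_aux hN hM hw' hacc (hcomm ▸ hsP : s ∈ N ∪ M)
        (by rw [hcomm]; exact hu) huN
  · intro x
    by_cases hex : ∃ v, IsExit δ (M ∪ N) x v
    · exact Or.inr (hM4 x hex).2
    · exact Or.inl hex

end UnionLemma
section Saturation

variable {Q : Type u} {E : Type v} {δ : Q → E → Option Q} {s : Q} {n : ℕ} {X : Fin n → Set Q}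

open Classical in
/-- saturation of `M` by the classes meeting it. -/
noncomputable def satOf (X : Fin n → Set Q) (M : Set Q) : Set Q :=
  M ∪ ⋃ i ∈ (Finset.univ.filter fun i => (X i ∩ M).Nonempty), X i

lemma satOf_subset {M : Set Q} : M ⊆ satOf X M := Set.subset_union_left

lemma satOf_spec {M : Set Q} {u : Q} (h : u ∈ satOf X M) :
    u ∈ M ∨ ∃ i, (X i ∩ M).Nonempty ∧ u ∈ X i := by
  rcases h with h | h
  · exact Or.inl h
  · simp only [Set.mem_iUnion, Finset.mem_filter] at h
    obtain ⟨i, ⟨-, hmeet⟩, hu⟩ := h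
    exact Or.inr ⟨i, hmeet, hu⟩

lemma satOf_class_subset {M : Set Q} {i : Fin n} (h : (X i ∩ M).Nonempty) :
    X i ⊆ satOf X M := by
  intro u hu
  right
  simp only [Set.mem_iUnion, Finset.mem_filter]
  exact ⟨i, ⟨Finset.mem_univ i, h⟩, hu⟩

lemma satOf_saturated (hdisj : ∀ i j, i ≠ j → Disjoint (X i) (X j))
    (hthin : ∀ i, IsThinModule δ s (X i)) {M : Set Q} {u : Q} (hu : u ∈ satOf X M) :
    rho X u ⊆ satOf X M := by
  rcases rho_cases hdisj u with ⟨i, hui, hrho⟩ | ⟨-, hrho⟩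
  · rw [hrho]
    rcases satOf_spec hu with h | ⟨k, hk, huk⟩
    · exact satOf_class_subset ⟨u, hui, h⟩
    · have hik : i = k := by
        by_contra hne
        exact Set.disjoint_left.mp (hdisj i k hne) hui huk
      exact hik ▸ satOf_class_subset (hik ▸ hk)
  · rw [hrho]
    intro w hw
    cases hw
    exact hu

lemma satOf_noclass {M : Set Q} {p : Q} (hp : ∀ i, p ∉ X i) (h : p ∈ satOf X M) :
    p ∈ M := by
  rcases satOf_spec h with h | ⟨i, -, hpi⟩
  · exact h
  · exact absurd hpi (hp i)

lemma satOf_meets (hdisj : ∀ i j, i ≠ j → Disjoint (X i) (X j)) {M : Set Q} {i : Fin n}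
    (h : (X i ∩ satOf X M).Nonempty) : (X i ∩ M).Nonempty := by
  obtain ⟨a, haX, haS⟩ := h
  rcases satOf_spec haS with h | ⟨k, hk, hak⟩
  · exact ⟨a, haX, h⟩
  · have hik : i = k := by
      by_contra hne
      exact Set.disjoint_left.mp (hdisj i k hne) haX hak
    exact hik ▸ hk

lemma satOf_thin [Finite Q] (hacc : Accessible δ s)
    (hthin : ∀ i, IsThinModule δ s (X i)) {M : Set Q} (hM : IsThinModule δ s M) :
    IsThinModule δ s (satOf X M) := by
  classical
  have aux : ∀ t : Finset (Fin n), (∀ i ∈ t, (X i ∩ M).Nonempty) →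
      IsThinModule δ s (M ∪ ⋃ i ∈ t, X i) := by
    intro t
    induction t using Finset.induction_on with
    | empty => intro _; simpa using hM
    | @insert i t hit ih =>
        intro hmeets
        have h1 : IsThinModule δ s (M ∪ ⋃ j ∈ t, X j) :=
          ih (fun j hj => hmeets j (Finset.mem_insert_of_mem hj))
        obtain ⟨a, haX, haM⟩ := hmeets i (Finset.mem_insert_self i t)
        have h2 : IsThinModule δ s ((M ∪ ⋃ j ∈ t, X j) ∪ X i) :=
          union_thin hacc h1 (hthin i) ⟨a, Or.inl haM, haX⟩
        have heq : M ∪ ⋃ j ∈ insert i t, X j = (M ∪ ⋃ j ∈ t, X j) ∪ X i := by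
          rw [Finset.set_biUnion_insert, Set.union_comm (X i) _, ← Set.union_assoc]
        rw [heq]
        exact h2
  have := aux (Finset.univ.filter fun i => (X i ∩ M).Nonempty)
    (fun i hi => (Finset.mem_filter.mp hi).2)
  exact this

lemma satOf_nonstart {M : Set Q} {q : Q} (hq : q ≠ s) (hqM : q ∈ M)
    (hns : ¬ IsStartNode δ s M q) : ¬ IsStartNode δ s (satOf X M) q := by
  rintro (⟨-, hqs⟩ | ⟨hs, hent⟩)
  · exact hq hqs
  · obtain ⟨-, x, v, hv, arc⟩ := hent
    exact hns (Or.inr ⟨fun hsM => hs (satOf_subset hsM),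
      hqM, x, v, fun h => hv (satOf_subset h), arc⟩)

end Saturation
section Contraction

variable {Q : Type u} {E : Type v} {δ : Q → E → Option Q} {s q : Q} {n : ℕ} {X : Fin n → Set Q}

lemma cstate_class (hdisj : ∀ i j, i ≠ j → Disjoint (X i) (X j)) {A : CState X} {u : Q}
    (hu : u ∈ A.1) : A.1 = rho X u := by
  obtain ⟨p, hp⟩ := A.2
  rw [← hp] at hu ⊢
  exact (rho_eq_of_mem hdisj hu).symm

lemma CRel_unique (hdisj : ∀ i j, i ≠ j → Disjoint (X i) (X j))
    (hthin : ∀ i, IsThinModule δ s (X i)) {A : CState X} {x : E}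
    {B₁ B₂ : Set Q} (h₁ : CRel δ X A.1 x B₁) (h₂ : CRel δ X A.1 x B₂) : B₁ = B₂ := by
  obtain ⟨⟨u₁, v₁, hu₁, hv₁, arc₁⟩, hside₁⟩ := h₁
  obtain ⟨⟨u₂, v₂, hu₂, hv₂, arc₂⟩, hside₂⟩ := h₂
  have hu₁A : u₁ ∈ A.1 := hu₁ ▸ mem_rho_self u₁
  have hu₂A : u₂ ∈ A.1 := hu₂ ▸ mem_rho_self u₂
  obtain ⟨p, hp⟩ := A.2
  rcases rho_cases hdisj p with ⟨i, hpi, hrho⟩ | ⟨hno, hrho⟩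
  · have hAXi : A.1 = X i := by rw [← hp, hrho]
    have hu₁i : u₁ ∈ X i := hAXi ▸ hu₁A
    have hu₂i : u₂ ∈ X i := hAXi ▸ hu₂A
    have hB₁ : B₁ ≠ A.1 := by
      rcases hside₁ with h | ⟨u, hAu, hunoX, -⟩
      · exact fun hh => h hh.symm
      · exfalso
        have : u₁ = u := by
          have := hu₁A
          rw [hAu] at this
          exact this
        exact hunoX i (this ▸ hu₁i)
    have hB₂ : B₂ ≠ A.1 := by
      rcases hside₂ with h | ⟨u, hAu, hunoX, -⟩
      · exact fun hh => h hh.symm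
      · exfalso
        have : u₂ = u := by
          have := hu₂A
          rw [hAu] at this
          exact this
        exact hunoX i (this ▸ hu₂i)
    have hv₁i : v₁ ∉ X i := by
      intro hmem
      exact hB₁ (by rw [← hv₁, rho_eq_X hdisj hmem, hAXi])
    have hv₂i : v₂ ∉ X i := by
      intro hmem
      exact hB₂ (by rw [← hv₂, rho_eq_X hdisj hmem, hAXi])
    have : v₁ = v₂ := thin_exit_unique (hthin i) ⟨hv₁i, u₁, hu₁i, arc₁⟩ ⟨hv₂i, u₂, hu₂i, arc₂⟩
    rw [← hv₁, ← hv₂, this]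
  · have hA1 : A.1 = {p} := by rw [← hp, hrho]
    have h1 : u₁ = p := by have := hu₁A; rw [hA1] at this; exact this
    have h2 : u₂ = p := by have := hu₂A; rw [hA1] at this; exact this
    have : v₁ = v₂ := by
      have := arc₁
      rw [h1, ← h2, arc₂] at this
      exact (Option.some.inj this).symm
    rw [← hv₁, ← hv₂, this]

lemma Cdelta_eq_some (hdisj : ∀ i j, i ≠ j → Disjoint (X i) (X j))
    (hthin : ∀ i, IsThinModule δ s (X i)) {A B : CState X} {x : E} :
    Cδ δ X A x = some B ↔ CRel δ X A.1 x B.1 := by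
  unfold Cδ
  by_cases h : ∃ B' : CState X, CRel δ X A.1 x B'.1
  · rw [dif_pos h]
    constructor
    · intro heq
      obtain rfl := Option.some.inj heq
      exact Classical.choose_spec h
    · intro hB
      have hspec := Classical.choose_spec h
      have heq : (Classical.choose h).1 = B.1 := CRel_unique (s := s) hdisj hthin hspec hB
      rw [Subtype.ext heq]
  · rw [dif_neg h]
    constructor
    · intro h'; cases h'
    · intro hB; exact absurd ⟨B, hB⟩ h

lemma cstep (hdisj : ∀ i j, i ≠ j → Disjoint (X i) (X j))
    (hthin : ∀ i, IsThinModule δ s (X i)) {u v : Q} {x : E}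
    (harc : δ u x = some v) (hne : rho X u ≠ rho X v) :
    Cδ δ X ⟨rho X u, u, rfl⟩ x = some ⟨rho X v, v, rfl⟩ :=
  (Cdelta_eq_some (s := s) hdisj hthin).mpr ⟨⟨u, v, rfl, rfl, harc⟩, Or.inl hne⟩

lemma reaches_W (hdisj : ∀ i j, i ≠ j → Disjoint (X i) (X j))
    (hthin : ∀ i, IsThinModule δ s (X i)) {p : Q} (h : Reaches δ s p) :
    Reaches (Cδ δ X) ⟨rho X s, s, rfl⟩ ⟨rho X p, p, rfl⟩ := by
  induction h with
  | refl => exact Relation.ReflTransGen.refl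
  | @tail c d hac hcd ih =>
      obtain ⟨x, harc⟩ := hcd
      by_cases hcd' : rho X c = rho X d
      · have heq : (⟨rho X d, d, rfl⟩ : CState X) = ⟨rho X c, c, rfl⟩ := Subtype.ext hcd'.symm
        rw [heq]; exact ih
      · exact Relation.ReflTransGen.tail ih ⟨x, cstep (s := s) hdisj hthin harc hcd'⟩

lemma part2 (hdisj : ∀ i j, i ≠ j → Disjoint (X i) (X j))
    (hthin : ∀ i, IsThinModule δ s (X i)) (hq : q ≠ s)
    (hK : ∀ i, ¬ Kset δ s q ⊆ X i) : rho X q ≠ rho X s := by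
  intro heq
  rcases rho_cases hdisj q with ⟨i, hqi, hrho⟩ | ⟨hno, hrho⟩
  · have hsXi : s ∈ X i := by
      have h1 : s ∈ rho X s := mem_rho_self s
      rw [← heq, hrho] at h1
      exact h1
    refine hK i (Set.sInter_subset_of_mem ⟨hthin i, hqi, ?_⟩)
    rintro (⟨-, hqs⟩ | ⟨hs, -⟩)
    · exact hq hqs
    · exact hs hsXi
  · have h1 : s ∈ rho X s := mem_rho_self s
    rw [← heq, hrho] at h1
    cases h1
    exact hq rfl

lemma hK_entrance (hthin : ∀ i, IsThinModule δ s (X i)) (hq : q ≠ s)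
    (hK : ∀ i, ¬ Kset δ s q ⊆ X i) {i : Fin n} (hqi : q ∈ X i) :
    s ∉ X i ∧ ∀ v, IsEntrance δ (X i) v → v = q := by
  have hstart : IsStartNode δ s (X i) q := by
    by_contra hns
    exact hK i (Set.sInter_subset_of_mem ⟨hthin i, hqi, hns⟩)
  rcases hstart with ⟨-, hqs⟩ | ⟨hs, hent⟩
  · exact absurd hqs hq
  · exact ⟨hs, fun v hv => (hthin i).1.2.1 v q hv hent⟩

end Contraction
section Pull

variable {Q : Type u} {E : Type v} {δ : Q → E → Option Q} {s q : Q} {n : ℕ} {X : Fin n → Set Q}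

/-- pullback of a set of classes. -/
def pullb (N : Set (CState X)) : Set Q :=
  {u | ∃ A ∈ N, u ∈ (A : { A : Set Q // ∃ q : Q, rho X q = A }).1}

lemma mem_pullb_iff (hdisj : ∀ i j, i ≠ j → Disjoint (X i) (X j)) {N : Set (CState X)} {u : Q} :
    u ∈ pullb N ↔ (⟨rho X u, u, rfl⟩ : CState X) ∈ N := by
  constructor
  · rintro ⟨A, hA, hu⟩
    have heq : A = ⟨rho X u, u, rfl⟩ := Subtype.ext (cstate_class hdisj hu)
    exact heq ▸ hA
  · intro h
    exact ⟨_, h, mem_rho_self (X := X) u⟩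

lemma transGen_first {α : Type _} {r : α → α → Prop} {a b : α}
    (h : Relation.TransGen r a b) : ∃ c, r a c ∧ Relation.ReflTransGen r c b := by
  rw [Relation.TransGen.head'_iff] at h
  exact h

lemma pull_thin (hdisj : ∀ i j, i ≠ j → Disjoint (X i) (X j))
    (hthin : ∀ i, IsThinModule δ s (X i))
    {N : Set (CState X)} (hN : IsThinModule (Cδ δ X) ⟨rho X s, s, rfl⟩ N)
    (hNq : (⟨rho X q, q, rfl⟩ : CState X) ∈ N) (hρqs : rho X q ≠ rho X s)
    (hNns : ¬ IsStartNode (Cδ δ X) ⟨rho X s, s, rfl⟩ N ⟨rho X q, q, rfl⟩)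
    (hqs : q ≠ s) :
    IsThinModule δ s (pullb N) ∧ q ∈ pullb N ∧ ¬ IsStartNode δ s (pullb N) q := by
  have hclassmem : ∀ {u v : Q}, rho X u = rho X v → u ∈ pullb N → v ∈ pullb N := by
    intro u v h hu
    rw [mem_pullb_iff hdisj] at hu ⊢
    have heq : (⟨rho X v, v, rfl⟩ : CState X) = ⟨rho X u, u, rfl⟩ := Subtype.ext h.symm
    rw [heq]; exact hu
  -- projection of an arc crossing the boundary of `pullb N` (either direction)
  have hcross : ∀ {u v : Q} {x : E}, δ u x = some v →
      ((u ∈ pullb N ∧ v ∉ pullb N) ∨ (u ∉ pullb N ∧ v ∈ pullb N)) →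
      rho X u ≠ rho X v ∧ Cδ δ X ⟨rho X u, u, rfl⟩ x = some ⟨rho X v, v, rfl⟩ := by
    intro u v x harc hmem
    have hne : rho X u ≠ rho X v := by
      intro heq
      rcases hmem with ⟨h1, h2⟩ | ⟨h1, h2⟩
      · exact h2 (hclassmem heq h1)
      · exact h1 (hclassmem heq.symm h2)
    exact ⟨hne, cstep (s := s) hdisj hthin harc hne⟩
  have entW : ∀ {u : Q}, IsEntrance δ (pullb N) u →
      IsEntrance (Cδ δ X) N ⟨rho X u, u, rfl⟩ := by
    rintro u ⟨huP, x, v, hvP, harc⟩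
    obtain ⟨hne, hstep⟩ := hcross harc (Or.inr ⟨hvP, huP⟩)
    exact ⟨(mem_pullb_iff hdisj).mp huP, x, ⟨rho X v, v, rfl⟩,
      fun h => hvP ((mem_pullb_iff hdisj).mpr h), hstep⟩
  have hXsub : ∀ {u : Q} {i : Fin n}, u ∈ pullb N → rho X u = X i → X i ⊆ pullb N := by
    intro u i hu hrho z hz
    refine ⟨⟨rho X u, u, rfl⟩, (mem_pullb_iff hdisj).mp hu, ?_⟩
    show z ∈ rho X u
    exact hrho.symm ▸ hz
  have hM2 : ∀ u v : Q, IsEntrance δ (pullb N) u → IsEntrance δ (pullb N) v → u = v := by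
    intro u v hu hv
    have hcls : (⟨rho X u, u, rfl⟩ : CState X) = ⟨rho X v, v, rfl⟩ :=
      hN.1.2.1 _ _ (entW hu) (entW hv)
    have hclass : rho X u = rho X v := congrArg Subtype.val hcls
    rcases rho_cases hdisj u with ⟨i, hui, hrho⟩ | ⟨-, hrho⟩
    · have hvi : v ∈ X i := by
        have h1 := mem_rho_self (X := X) v
        rw [← hclass, hrho] at h1
        exact h1
      obtain ⟨huP, x₁, w₁, hw₁, arc₁⟩ := hu
      obtain ⟨hvP, x₂, w₂, hw₂, arc₂⟩ := hv
      have hsub := hXsub huP hrho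
      exact (hthin i).1.2.1 u v ⟨hui, x₁, w₁, fun h => hw₁ (hsub h), arc₁⟩
        ⟨hvi, x₂, w₂, fun h => hw₂ (hsub h), arc₂⟩
    · have h1 := mem_rho_self (X := X) v
      rw [← hclass, hrho] at h1
      exact (Set.mem_singleton_iff.mp h1).symm
  have hM3 : s ∈ pullb N → ∀ u : Q, IsEntrance δ (pullb N) u → u = s := by
    intro hsP u hu
    have hsN : (⟨rho X s, s, rfl⟩ : CState X) ∈ N := (mem_pullb_iff hdisj).mp hsP
    have hcls : (⟨rho X u, u, rfl⟩ : CState X) = ⟨rho X s, s, rfl⟩ :=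
      hN.1.2.2.1 hsN _ (entW hu)
    have hclass : rho X u = rho X s := congrArg Subtype.val hcls
    rcases rho_cases hdisj u with ⟨i, hui, hrho⟩ | ⟨-, hrho⟩
    · have hsi : s ∈ X i := by
        have h1 := mem_rho_self (X := X) s
        rw [← hclass, hrho] at h1
        exact h1
      obtain ⟨huP, x₁, w₁, hw₁, arc₁⟩ := hu
      have hsub := hXsub huP hrho
      exact (hthin i).1.2.2.1 hsi u ⟨hui, x₁, w₁, fun h => hw₁ (hsub h), arc₁⟩
    · have h1 := mem_rho_self (X := X) s
      rw [← hclass, hrho] at h1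
      exact (Set.mem_singleton_iff.mp h1).symm
  have exW : ∀ {x : E} {v₀ : Q}, IsExit δ (pullb N) x v₀ →
      IsExit (Cδ δ X) N x ⟨rho X v₀, v₀, rfl⟩ := by
    rintro x v₀ ⟨hv₀P, u₀, hu₀P, arc₀⟩
    obtain ⟨hne, hstep⟩ := hcross arc₀ (Or.inl ⟨hu₀P, hv₀P⟩)
    exact ⟨fun h => hv₀P ((mem_pullb_iff hdisj).mpr h),
      ⟨rho X u₀, u₀, rfl⟩, (mem_pullb_iff hdisj).mp hu₀P, hstep⟩
  have hM4 : ∀ x : E, (∃ v, IsExit δ (pullb N) x v) →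
      ((∀ v w : Q, IsExit δ (pullb N) x v → IsExit δ (pullb N) x w → v = w) ∧
        ∀ u ∈ pullb N, (δ u x).isSome) := by
    rintro x ⟨v₁, hv₁⟩
    have hWM4 := hN.1.2.2.2 x ⟨_, exW hv₁⟩
    constructor
    · intro v w hv hw
      have hcls : (⟨rho X v, v, rfl⟩ : CState X) = ⟨rho X w, w, rfl⟩ :=
        hWM4.1 _ _ (exW hv) (exW hw)
      have hclass : rho X v = rho X w := congrArg Subtype.val hcls
      rcases rho_cases hdisj v with ⟨j, hvj, hrho⟩ | ⟨-, hrho⟩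
      · have hwj : w ∈ X j := by
          have h1 := mem_rho_self (X := X) w
          rw [← hclass, hrho] at h1
          exact h1
        have hdisjP : ∀ z ∈ X j, z ∉ pullb N := by
          intro z hz hzP
          apply hv.1
          apply hclassmem (u := z)
          · rw [rho_eq_X hdisj hz, ← hrho]
          · exact hzP
        obtain ⟨-, uv, huvP, arcv⟩ := hv
        obtain ⟨-, uw, huwP, arcw⟩ := hw
        exact (hthin j).1.2.1 v w
          ⟨hvj, x, uv, fun h => hdisjP uv h huvP, arcv⟩
          ⟨hwj, x, uw, fun h => hdisjP uw h huwP, arcw⟩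
      · have h1 := mem_rho_self (X := X) w
        rw [← hclass, hrho] at h1
        exact (Set.mem_singleton_iff.mp h1).symm
    · intro u huP
      have htotW := hWM4.2 _ ((mem_pullb_iff hdisj).mp huP)
      obtain ⟨B, hB⟩ := Option.isSome_iff_exists.mp htotW
      obtain ⟨⟨u', v', hu', hv', arc'⟩, hside⟩ :=
        (Cdelta_eq_some (s := s) hdisj hthin).mp hB
      have hu'' : rho X u' = rho X u := hu'
      have hv'' : rho X v' = B.1 := hv'
      rcases rho_cases hdisj u with ⟨i, hui, hrho⟩ | ⟨-, hrho⟩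
      · have hu'i : u' ∈ X i := by
          have h1 := mem_rho_self (X := X) u'
          rw [hu'', hrho] at h1
          exact h1
        rcases hside with h | ⟨z, hz, hznoX, -⟩
        · have h' : rho X u ≠ B.1 := h
          have hv'i : v' ∉ X i := by
            intro hmem
            exact h' ((hrho.trans (rho_eq_X hdisj hmem).symm).trans hv'')
          exact thin_exit_total (hthin i) ⟨hv'i, u', hu'i, arc'⟩ u hui
        · exfalso
          have hz'' : rho X u = {z} := hz
          have huz : u = z := by
            have h1 := mem_rho_self (X := X) u
            rw [hz''] at h1
            exact h1
          exact hznoX i (huz ▸ hui)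
      · have h1 := mem_rho_self (X := X) u'
        rw [hu'', hrho] at h1
        have hu'u : u' = u := h1
        have harc : δ u x = some v' := hu'u ▸ arc'
        rw [harc]
        rfl
  refine ⟨⟨⟨⟨q, (mem_pullb_iff hdisj).mpr hNq⟩, hM2, hM3, hM4⟩, ?_⟩,
    (mem_pullb_iff hdisj).mpr hNq, ?_⟩
  · -- thinness
    intro x
    by_cases hex : ∃ v, IsExit δ (pullb N) x v
    · right
      rintro ⟨z, hzP, hcyc⟩
      obtain ⟨v₁, hv₁⟩ := hex
      have nocycW := thin_exit_nocycle hN (exW hv₁)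
      have hcyc' := transGen_both hcyc hzP
      have TC : ∀ a b : Q,
          Relation.TransGen (fun u v => u ∈ pullb N ∧ v ∈ pullb N ∧ δ u x = some v) a b →
          (Relation.TransGen (fun A B : CState X => A ∈ N ∧ Cδ δ X A x = some B)
              ⟨rho X a, a, rfl⟩ ⟨rho X b, b, rfl⟩ ∨
            (rho X a = rho X b ∧
              Relation.TransGen (fun u v => u ∈ rho X a ∧ δ u x = some v) a b)) := by
        intro a b h
        induction h with
        | @single d hd =>
            by_cases hcl : rho X a = rho X d
            · exact Or.inr ⟨hcl, Relation.TransGen.single ⟨mem_rho_self (X := X) a, hd.2.2⟩⟩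
            · exact Or.inl (Relation.TransGen.single
                ⟨(mem_pullb_iff hdisj).mp hd.1, cstep (s := s) hdisj hthin hd.2.2 hcl⟩)
        | @tail c d hac hcd ih =>
            by_cases hcl : rho X c = rho X d
            · rcases ih with hW | ⟨hcls, hTG⟩
              · left
                have heq : (⟨rho X d, d, rfl⟩ : CState X) = ⟨rho X c, c, rfl⟩ :=
                  Subtype.ext hcl.symm
                rw [heq]; exact hW
              · right
                refine ⟨hcls.trans hcl, Relation.TransGen.tail hTG ⟨?_, hcd.2.2⟩⟩
                rw [hcls]; exact mem_rho_self (X := X) c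
            · have hstepW := cstep (s := s) hdisj hthin hcd.2.2 hcl
              have hcN : (⟨rho X c, c, rfl⟩ : CState X) ∈ N :=
                (mem_pullb_iff hdisj).mp hcd.1
              rcases ih with hW | ⟨hcls, hTG⟩
              · exact Or.inl (Relation.TransGen.tail hW ⟨hcN, hstepW⟩)
              · left
                have heq : (⟨rho X a, a, rfl⟩ : CState X) = ⟨rho X c, c, rfl⟩ :=
                  Subtype.ext hcls
                rw [heq]
                exact Relation.TransGen.single ⟨hcN, hstepW⟩
      rcases TC z z hcyc' with hW | ⟨-, hTG⟩
      · exact nocycW ⟨⟨rho X z, z, rfl⟩, (mem_pullb_iff hdisj).mp hzP, hW⟩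
      · rcases rho_cases hdisj z with ⟨i, hzi, hrho⟩ | ⟨hno, hrho⟩
        · have hziN : (⟨rho X z, z, rfl⟩ : CState X) ∈ N := (mem_pullb_iff hdisj).mp hzP
          have htotW := (hN.1.2.2.2 x ⟨_, exW hv₁⟩).2 _ hziN
          obtain ⟨B, hB⟩ := Option.isSome_iff_exists.mp htotW
          obtain ⟨⟨u', v', hu', hv', arc'⟩, hside⟩ :=
            (Cdelta_eq_some (s := s) hdisj hthin).mp hB
          have hu'' : rho X u' = rho X z := hu'
          have hv'' : rho X v' = B.1 := hv'
          have hu'i : u' ∈ X i := by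
            have h1 := mem_rho_self (X := X) u'
            rw [hu'', hrho] at h1
            exact h1
          have hexXi : ∃ w, IsExit δ (X i) x w := by
            rcases hside with h | ⟨z', hz', hznoX, -⟩
            · have h' : rho X z ≠ B.1 := h
              refine ⟨v', ⟨?_, u', hu'i, arc'⟩⟩
              intro hv'i
              exact h' ((hrho.trans (rho_eq_X hdisj hv'i).symm).trans hv'')
            · exfalso
              have hz'' : rho X z = {z'} := hz'
              have hzz' : z = z' := by
                have h1 := mem_rho_self (X := X) z
                rw [hz''] at h1
                exact h1
              exact hznoX i (hzz' ▸ hzi)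
          obtain ⟨w, hw⟩ := hexXi
          refine thin_exit_nocycle (hthin i) hw ⟨z, hzi, Relation.TransGen.mono ?_ _ _ hTG⟩
          intro u v huv
          exact ⟨by rw [← hrho]; exact huv.1, huv.2⟩
        · have hself : δ z x = some z := by
            obtain ⟨c, h1, hTG'⟩ := transGen_first hTG
            rcases Relation.ReflTransGen.cases_head hTG' with hcz | ⟨c', hcc', -⟩
            · exact hcz ▸ h1.2
            · have hcz : c = z := by
                have h2 := hcc'.1
                rw [hrho] at h2
                exact h2
              exact hcz ▸ h1.2
          have hstepW : Cδ δ X ⟨rho X z, z, rfl⟩ x = some ⟨rho X z, z, rfl⟩ :=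
            (Cdelta_eq_some (s := s) hdisj hthin).mpr
              ⟨⟨z, z, rfl, rfl, hself⟩, Or.inr ⟨z, hrho, hno, hself⟩⟩
          have hziN : (⟨rho X z, z, rfl⟩ : CState X) ∈ N := (mem_pullb_iff hdisj).mp hzP
          exact nocycW ⟨⟨rho X z, z, rfl⟩, hziN,
            Relation.TransGen.single ⟨hziN, hstepW⟩⟩
    · exact Or.inl hex
  · -- q not a start node of the pullback
    rintro (⟨-, hqs'⟩ | ⟨hs, hent⟩)
    · exact hqs hqs'
    · exact hNns (Or.inr ⟨fun h => hs ((mem_pullb_iff hdisj).mpr h), entW hent⟩)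

end Pull
section Push

variable {Q : Type u} {E : Type v} {δ : Q → E → Option Q} {s q : Q} {n : ℕ} {X : Fin n → Set Q}

/-- pushforward: the classes contained in `S`. -/
def pushf (X : Fin n → Set Q) (S : Set Q) : Set (CState X) :=
  {A | (A : { A : Set Q // ∃ q : Q, rho X q = A }).1 ⊆ S}

lemma push_thin [Finite Q] (hdisj : ∀ i j, i ≠ j → Disjoint (X i) (X j))
    (hthin : ∀ i, IsThinModule δ s (X i))
    {S : Set Q} (hS : IsThinModule δ s S) (hsat : ∀ u ∈ S, rho X u ⊆ S)
    (hqS : q ∈ S) (hqns : ¬ IsStartNode δ s S q)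
    (hρqs : rho X q ≠ rho X s)
    (hQent : ∀ i, q ∈ X i → ∀ v, IsEntrance δ (X i) v → v = q) :
    IsThinModule (Cδ δ X) ⟨rho X s, s, rfl⟩ (pushf X S) ∧
      (⟨rho X q, q, rfl⟩ : CState X) ∈ pushf X S ∧
      ¬ IsStartNode (Cδ δ X) ⟨rho X s, s, rfl⟩ (pushf X S) ⟨rho X q, q, rfl⟩ := by
  have hout : ∀ {A : CState X}, A ∉ pushf X S → ∀ {u : Q}, rho X u = A.1 → u ∉ S := by
    intro A hA u hu huS
    have h2 : A.1 ⊆ S := hu ▸ hsat u huS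
    exact hA h2
  have entZ : ∀ {B : CState X}, IsEntrance (Cδ δ X) (pushf X S) B →
      ∃ v, v ∈ B.1 ∧ IsEntrance δ S v := by
    rintro B ⟨hB, x, A, hA, hstep⟩
    obtain ⟨⟨u, v, hu, hv, arc⟩, -⟩ := (Cdelta_eq_some (s := s) hdisj hthin).mp hstep
    have hvB : v ∈ B.1 := hv ▸ mem_rho_self (X := X) v
    exact ⟨v, hvB, hB hvB, x, u, hout hA hu, arc⟩
  have exZ : ∀ {x : E} {B : CState X}, IsExit (Cδ δ X) (pushf X S) x B →
      ∃ v, v ∈ B.1 ∧ IsExit δ S x v := by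
    rintro x B ⟨hBnot, A, hA, hstep⟩
    obtain ⟨⟨u, v, hu, hv, arc⟩, -⟩ := (Cdelta_eq_some (s := s) hdisj hthin).mp hstep
    have huA : u ∈ A.1 := hu ▸ mem_rho_self (X := X) u
    have hvB : v ∈ B.1 := hv ▸ mem_rho_self (X := X) v
    exact ⟨v, hvB, hout hBnot hv, u, hA huA, arc⟩
  have hqmem : (⟨rho X q, q, rfl⟩ : CState X) ∈ pushf X S := hsat q hqS
  have hXisub : ∀ {i : Fin n}, (X i ∩ S).Nonempty → X i ⊆ S := by
    rintro i ⟨a, haX, haS⟩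
    have h1 := hsat a haS
    rw [rho_eq_X hdisj haX] at h1
    exact h1
  have hcrossing : ∀ {x : E}, (∃ v, IsExit δ S x v) → ∀ {p : Q}, p ∈ S →
      ∃ (B : CState X) (v t : Q), Cδ δ X ⟨rho X p, p, rfl⟩ x = some B ∧ v ∈ B.1 ∧
        Relation.ReflTransGen (fun a b => a ∈ S ∧ b ∈ S ∧ δ a x = some b) p t ∧
        t ∈ S ∧ δ t x = some v := by
    rintro x ⟨v₁, hv₁⟩ p hpS
    have totS := thin_exit_total hS hv₁
    have nocycS := thin_exit_nocycle hS hv₁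
    rcases rho_cases hdisj p with ⟨i, hpXi, hrho⟩ | ⟨hno, hrho⟩
    · have hXiS : X i ⊆ S := hXisub ⟨p, hpXi, hpS⟩
      have htotXi : ∀ u ∈ X i, (δ u x).isSome := fun u hu => totS u (hXiS hu)
      have hncXi : ¬ HasXCycleIn δ x (X i) := by
        rintro ⟨z, hz, hcyc⟩
        exact nocycS ⟨z, hXiS hz,
          Relation.TransGen.mono (fun a b hab => ⟨hXiS hab.1, hab.2⟩) _ _ hcyc⟩
      obtain ⟨t, w, hwalk, htXi, arct, hwnot⟩ := exists_exit_walk htotXi hncXi hpXi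
      have hne : rho X p ≠ rho X w := by
        intro heq
        apply hwnot
        have h1 := mem_rho_self (X := X) w
        rw [← heq, hrho] at h1
        exact h1
      have hstep : Cδ δ X ⟨rho X p, p, rfl⟩ x = some ⟨rho X w, w, rfl⟩ :=
        (Cdelta_eq_some (s := s) hdisj hthin).mpr
          ⟨⟨t, w, (rho_eq_X hdisj htXi).trans hrho.symm, rfl, arct⟩, Or.inl hne⟩
      refine ⟨⟨rho X w, w, rfl⟩, w, t, hstep, mem_rho_self (X := X) w, ?_, hXiS htXi, arct⟩
      exact Relation.ReflTransGen.mono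
        (fun a b hab => ⟨hXiS hab.1, hXiS hab.2.1, hab.2.2⟩) _ _ hwalk
    · obtain ⟨w, arc⟩ := Option.isSome_iff_exists.mp (totS p hpS)
      by_cases hne : rho X p = rho X w
      · have hwp : w = p := by
          have h1 := mem_rho_self (X := X) w
          rw [← hne, hrho] at h1
          exact h1
        have arc' : δ p x = some p := hwp ▸ arc
        have hstep : Cδ δ X ⟨rho X p, p, rfl⟩ x = some ⟨rho X p, p, rfl⟩ :=
          (Cdelta_eq_some (s := s) hdisj hthin).mpr
            ⟨⟨p, p, rfl, rfl, arc'⟩, Or.inr ⟨p, hrho, hno, arc'⟩⟩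
        exact ⟨⟨rho X p, p, rfl⟩, p, p, hstep, mem_rho_self (X := X) p,
          Relation.ReflTransGen.refl, hpS, arc'⟩
      · have hstep := cstep (s := s) hdisj hthin arc hne
        exact ⟨⟨rho X w, w, rfl⟩, w, p, hstep, mem_rho_self (X := X) w,
          Relation.ReflTransGen.refl, hpS, arc⟩
  have hM4 : ∀ x : E, (∃ B, IsExit (Cδ δ X) (pushf X S) x B) →
      ((∀ B B' : CState X, IsExit (Cδ δ X) (pushf X S) x B →
          IsExit (Cδ δ X) (pushf X S) x B' → B = B') ∧
        ∀ A ∈ pushf X S, (Cδ δ X A x).isSome) := by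
    rintro x ⟨B₁, hB₁⟩
    obtain ⟨v₁, hv₁B, hv₁⟩ := exZ hB₁
    constructor
    · intro B B' hB hB'
      obtain ⟨v, hvB, hv⟩ := exZ hB
      obtain ⟨v', hv'B, hv'⟩ := exZ hB'
      have hvv' : v = v' := thin_exit_unique hS hv hv'
      apply Subtype.ext
      rw [cstate_class hdisj hvB, cstate_class hdisj hv'B, hvv']
    · intro A hA
      obtain ⟨p, hp⟩ := A.2
      have hpA : p ∈ A.1 := hp ▸ mem_rho_self (X := X) p
      have hpS : p ∈ S := hA hpA
      obtain ⟨B, v, t, hstep, -, -, -, -⟩ := hcrossing ⟨v₁, hv₁⟩ hpS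
      have hAeq : A = ⟨rho X p, p, rfl⟩ := Subtype.ext hp.symm
      rw [hAeq, hstep]
      rfl
  have hM2 : ∀ B B' : CState X, IsEntrance (Cδ δ X) (pushf X S) B →
      IsEntrance (Cδ δ X) (pushf X S) B' → B = B' := by
    intro B B' hB hB'
    obtain ⟨v, hvB, hv⟩ := entZ hB
    obtain ⟨v', hv'B, hv'⟩ := entZ hB'
    have hvv' : v = v' := hS.1.2.1 v v' hv hv'
    apply Subtype.ext
    rw [cstate_class hdisj hvB, cstate_class hdisj hv'B, hvv']
  have hM3 : (⟨rho X s, s, rfl⟩ : CState X) ∈ pushf X S →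
      ∀ B : CState X, IsEntrance (Cδ δ X) (pushf X S) B → B = ⟨rho X s, s, rfl⟩ := by
    intro hsP B hB
    have hsS : s ∈ S := hsP (mem_rho_self (X := X) s)
    obtain ⟨v, hvB, hv⟩ := entZ hB
    have hvs : v = s := hS.1.2.2.1 hsS v hv
    apply Subtype.ext
    rw [cstate_class hdisj hvB, hvs]
  refine ⟨⟨⟨⟨⟨rho X q, q, rfl⟩, hqmem⟩, hM2, hM3, hM4⟩, ?_⟩, hqmem, ?_⟩
  · -- thinness of the pushforward
    intro x
    by_cases hex : ∃ B, IsExit (Cδ δ X) (pushf X S) x B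
    · right
      rintro ⟨B₀, hB₀, hTG⟩
      obtain ⟨B₁, hB₁⟩ := hex
      obtain ⟨v₁, hv₁B, hv₁⟩ := exZ hB₁
      have nocycS := thin_exit_nocycle hS hv₁
      have hTG' := transGen_both hTG hB₀
      have lift1 : ∀ {A B : CState X}, A ∈ pushf X S → B ∈ pushf X S →
          Cδ δ X A x = some B → ∀ p ∈ A.1, ∃ v ∈ B.1,
          Relation.TransGen (fun a b => a ∈ S ∧ b ∈ S ∧ δ a x = some b) p v := by
        intro A B hA hB hstep p hpA
        have hAp : A = ⟨rho X p, p, rfl⟩ := Subtype.ext (cstate_class hdisj hpA)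
        rw [hAp] at hstep
        obtain ⟨B', v, t, hstep', hvB', hwalk, htS, arct⟩ := hcrossing ⟨v₁, hv₁⟩ (hA hpA)
        have hBB' : B' = B := by
          rw [hstep'] at hstep
          exact (Option.some.inj hstep)
        refine ⟨v, hBB' ▸ hvB', Relation.TransGen.tail' hwalk ⟨htS, ?_, arct⟩⟩
        exact hB (hBB' ▸ hvB')
      have around : ∀ {B C : CState X},
          Relation.TransGen (fun A B : CState X =>
            A ∈ pushf X S ∧ B ∈ pushf X S ∧ Cδ δ X A x = some B) B C →
          ∀ p ∈ B.1, ∃ v ∈ C.1,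
          Relation.TransGen (fun a b => a ∈ S ∧ b ∈ S ∧ δ a x = some b) p v := by
        intro B C h
        induction h with
        | @single D hD =>
            intro p hp
            exact lift1 hD.1 hD.2.1 hD.2.2 p hp
        | @tail C D hBC hCD ih =>
            intro p hp
            obtain ⟨v, hvC, hTGv⟩ := ih p hp
            obtain ⟨v', hv'D, hTGv'⟩ := lift1 hCD.1 hCD.2.1 hCD.2.2 v hvC
            exact ⟨v', hv'D, hTGv.trans hTGv'⟩
      obtain ⟨p₀, hp₀⟩ := B₀.2
      have hp₀B : p₀ ∈ B₀.1 := hp₀ ▸ mem_rho_self (X := X) p₀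
      have gdef : ∀ p : {p : Q // p ∈ B₀.1}, ∃ v : {p : Q // p ∈ B₀.1},
          Relation.TransGen (fun a b => a ∈ S ∧ b ∈ S ∧ δ a x = some b) p.1 v.1 := by
        intro p
        obtain ⟨v, hvB, hTGv⟩ := around hTG' p.1 p.2
        exact ⟨⟨v, hvB⟩, hTGv⟩
      set g : {p : Q // p ∈ B₀.1} → {p : Q // p ∈ B₀.1} :=
        fun p => Classical.choose (gdef p) with hg
      have hgstep : ∀ p, Relation.TransGen (fun a b => a ∈ S ∧ b ∈ S ∧ δ a x = some b)
          p.1 (g p).1 := fun p => Classical.choose_spec (gdef p)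
      have hstep : ∀ k : ℕ, Relation.TransGen (fun a b => a ∈ S ∧ b ∈ S ∧ δ a x = some b)
          (g^[k] ⟨p₀, hp₀B⟩).1 (g^[k + 1] ⟨p₀, hp₀B⟩).1 := by
        intro k
        rw [Function.iterate_succ_apply']
        exact hgstep _
      have hcomp : ∀ i d : ℕ, Relation.TransGen (fun a b => a ∈ S ∧ b ∈ S ∧ δ a x = some b)
          (g^[i] ⟨p₀, hp₀B⟩).1 (g^[i + d + 1] ⟨p₀, hp₀B⟩).1 := by
        intro i d
        induction d with
        | zero => exact hstep i
        | succ d ih => exact ih.trans (hstep (i + d + 1))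
      obtain ⟨i, j, hne, heq⟩ :=
        Finite.exists_ne_map_eq_of_infinite (fun k : ℕ => g^[k] ⟨p₀, hp₀B⟩)
      have hcyc : ∃ z ∈ S, Relation.TransGen
          (fun a b => a ∈ S ∧ δ a x = some b) z z := by
        rcases Nat.lt_or_ge i j with hij | hij
        · have h1 := hcomp i (j - i - 1)
          have h2 : i + (j - i - 1) + 1 = j := by omega
          rw [h2, ← heq] at h1
          exact ⟨(g^[i] ⟨p₀, hp₀B⟩).1, hB₀ (g^[i] ⟨p₀, hp₀B⟩).2,
            Relation.TransGen.mono (fun a b hab => ⟨hab.1, hab.2.2⟩) _ _ h1⟩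
        · have hji : j < i := by omega
          have h1 := hcomp j (i - j - 1)
          have h2 : j + (i - j - 1) + 1 = i := by omega
          rw [h2, heq] at h1
          exact ⟨(g^[j] ⟨p₀, hp₀B⟩).1, hB₀ (g^[j] ⟨p₀, hp₀B⟩).2,
            Relation.TransGen.mono (fun a b hab => ⟨hab.1, hab.2.2⟩) _ _ h1⟩
      exact nocycS hcyc
    · exact Or.inl hex
  · -- the class of q is not a start node of the pushforward
    rintro (⟨-, hqeq⟩ | ⟨hsOut, hent⟩)
    · exact hρqs (congrArg Subtype.val hqeq)
    · have hsS : s ∉ S := by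
        intro hsS
        exact hsOut (hsat s hsS)
      obtain ⟨v, hvB, hv⟩ := entZ hent
      rcases rho_cases hdisj q with ⟨i, hqi, hrho⟩ | ⟨hno, hrho⟩
      · have hXiS : X i ⊆ S := by
          have h1 := hsat q hqS
          rw [hrho] at h1
          exact h1
        have hvXi : v ∈ X i := by
          have h1 : v ∈ rho X q := hvB
          rw [hrho] at h1
          exact h1
        obtain ⟨-, y, u, huS, arc⟩ := hv
        have hvent : IsEntrance δ (X i) v := ⟨hvXi, y, u, fun h => huS (hXiS h), arc⟩
        have hvq : v = q := hQent i hqi v hvent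
        exact hqns (Or.inr ⟨hsS, hqS, y, u, huS, hvq ▸ arc⟩)
      · have hvq : v = q := by
          have h1 : v ∈ rho X q := hvB
          rw [hrho] at h1
          exact h1
        exact hqns (Or.inr ⟨hsS, hvq ▸ hv⟩)

end Push
/-- Let `Z` be an accessible FSM with start state `s`, let
`X₁, …, Xₙ` be pairwise disjoint thin modules of `Z`, let `W = Z/X₁,…,Xₙ` be the
contraction with quotient map `ρ`, and let `q ≠ s` be a node with `K_q` contained
in no `Xᵢ`. Then `W` is accessible, `ρ(q)` is not the start state `ρ(s)` of `W`,
and `ρ(K_q) = K_{ρ(q)}`, where `K_{ρ(q)}` is computed in `W`. -/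
theorem stmt17 [Fintype Q] (δ : Q → E → Option Q) (s : Q) (hacc : Accessible δ s)
    (n : ℕ) (X : Fin n → Set Q) (hthin : ∀ i, IsThinModule δ s (X i))
    (hdisj : ∀ i j, i ≠ j → Disjoint (X i) (X j))
    (q : Q) (hq : q ≠ s) (hK : ∀ i, ¬ Kset δ s q ⊆ X i) :
    Accessible (Cδ δ X) ⟨rho X s, s, rfl⟩ ∧
    rho X q ≠ rho X s ∧
    Subtype.val '' Kset (Cδ δ X) ⟨rho X s, s, rfl⟩ ⟨rho X q, q, rfl⟩ =
      rho X '' Kset δ s q := by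
  have hρqs : rho X q ≠ rho X s := part2 hdisj hthin hq hK
  have hQent : ∀ i, q ∈ X i → ∀ v, IsEntrance δ (X i) v → v = q :=
    fun i hqi => (hK_entrance hthin hq hK hqi).2
  refine ⟨?_, hρqs, ?_⟩
  · intro B
    obtain ⟨p, hp⟩ := B.2
    have h1 := reaches_W (s := s) hdisj hthin (hacc p)
    have hBeq : B = ⟨rho X p, p, rfl⟩ := Subtype.ext hp.symm
    rw [hBeq]
    exact h1
  · ext C
    constructor
    · rintro ⟨B, hBK, rfl⟩
      have hpush : ∀ M : Set Q, (IsThinModule δ s M ∧ q ∈ M ∧ ¬ IsStartNode δ s M q) →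
          (B : { A : Set Q // ∃ w : Q, rho X w = A }).1 ⊆ satOf X M := by
        intro M hM
        obtain ⟨hpt, hpq, hpns⟩ :=
          push_thin hdisj hthin (satOf_thin hacc hthin hM.1)
            (fun u hu => satOf_saturated hdisj hthin hu)
            (satOf_subset hM.2.1) (satOf_nonstart (X := X) hq hM.2.1 hM.2.2) hρqs hQent
        exact Set.mem_sInter.mp hBK _ ⟨hpt, hpq, hpns⟩
      obtain ⟨p, hp⟩ := B.2
      rcases rho_cases hdisj p with ⟨i, hpi, hrho⟩ | ⟨hno, hrho⟩
      · have hBXi : (B : { A : Set Q // ∃ w : Q, rho X w = A }).1 = X i := by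
          rw [← hp, hrho]
        have hH : ∀ M, (IsThinModule δ s M ∧ q ∈ M ∧ ¬ IsStartNode δ s M q) →
            (X i ∩ M).Nonempty := by
          intro M hM
          have h1 := hpush M hM
          have h2 : X i ⊆ satOf X M := hBXi ▸ h1
          obtain ⟨a, ha⟩ := (hthin i).1.1
          exact satOf_meets hdisj ⟨a, ha, h2 ha⟩
        obtain ⟨a, haX, haK⟩ := lemmaE hacc (hthin i) hH
        refine ⟨a, haK, ?_⟩
        rw [rho_eq_X hdisj haX]
        exact hBXi.symm
      · have hBp : (B : { A : Set Q // ∃ w : Q, rho X w = A }).1 = {p} := by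
          rw [← hp, hrho]
        have hpK : p ∈ Kset δ s q := by
          rw [Kset, Set.mem_sInter]
          intro M hM
          have h1 := hpush M hM
          have h2 : p ∈ satOf X M := h1 (by rw [hBp]; rfl)
          exact satOf_noclass hno h2
        exact ⟨p, hpK, hp⟩
    · rintro ⟨u, huK, rfl⟩
      refine ⟨⟨rho X u, u, rfl⟩, ?_, rfl⟩
      refine Set.mem_sInter.mpr ?_
      rintro N ⟨hNt, hNq, hNns⟩
      obtain ⟨hpt, hpq, hpns⟩ := pull_thin hdisj hthin hNt hNq hρqs hNns hq
      have huP : u ∈ pullb N :=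
        (Set.sInter_subset_of_mem ⟨hpt, hpq, hpns⟩ : Kset δ s q ⊆ pullb N) huK
      exact (mem_pullb_iff hdisj).mp huP
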